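/- Let k = 2^s with s ≥ 2, and assign to each variable of T^c(x₁ ∨ ⋯ ∨ x_k) the node weight μ(x_i) = 1 for i = 1,…,k and μ(b_j) = 2^j for j = 1,…,s−1. For any assignment I of all the variables, let w₁ be the sum of μ(v) over the variables v with I(v) = 1, and let w₀ = 1 + (sum of μ(v) over the variables v with I(v) = 0), the extra 1 accounting for a constant node fixed to 0. Then w₁ + w₀ = 2k − 1, and the total weight of the constraints of T^c(x₁ ∨ ⋯ ∨ x_k) satisfied by I equals w₁·w₀/2. -/

import Mathlib

open Finset

/-- Value (total satisfied weight) of T^c(x₁ ∨ ⋯ ∨ x_k), for k = 2^s, under the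
assignment given by `x` (values of x₁,…,x_k) and `b` (values of b₁,…,b_{s−1}), all
1-indexed.  The constraints are: x_i = 1 with weight 1/2; b_j = 1 with weight 2^{j−1};
x_i ⊕ x_j = 1 (i < j) with weight 1/2; b_i ⊕ b_j = 1 (i < j) with weight 2^{i+j−1};
x_i ⊕ b_j = 1 with weight 2^{j−1}. -/
def TcVal (k s : ℕ) (x b : ℕ → Bool) : ℚ :=
  (∑ i ∈ Finset.Icc 1 k, if x i = true then (1 : ℚ)/2 else 0) +
  (∑ j ∈ Finset.Icc 1 (s - 1), if b j = true then (2 : ℚ)^(j - 1) else 0) +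
  (∑ i ∈ Finset.Icc 1 k, ∑ j ∈ Finset.Icc 1 k,
      if i < j ∧ xor (x i) (x j) = true then (1 : ℚ)/2 else 0) +
  (∑ i ∈ Finset.Icc 1 (s - 1), ∑ j ∈ Finset.Icc 1 (s - 1),
      if i < j ∧ xor (b i) (b j) = true then (2 : ℚ)^(i + j - 1) else 0) +
  (∑ i ∈ Finset.Icc 1 k, ∑ j ∈ Finset.Icc 1 (s - 1),
      if xor (x i) (b j) = true then (2 : ℚ)^(j - 1) else 0)

/-- Total weight of the constraints of T^c(x₁ ∨ ⋯ ∨ x_k). -/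
def TcWeight (k s : ℕ) : ℚ :=
  (∑ _i ∈ Finset.Icc 1 k, (1 : ℚ)/2) +
  (∑ j ∈ Finset.Icc 1 (s - 1), (2 : ℚ)^(j - 1)) +
  (∑ i ∈ Finset.Icc 1 k, ∑ j ∈ Finset.Icc 1 k, if i < j then (1 : ℚ)/2 else 0) +
  (∑ i ∈ Finset.Icc 1 (s - 1), ∑ j ∈ Finset.Icc 1 (s - 1),
      if i < j then (2 : ℚ)^(i + j - 1) else 0) +
  (∑ _i ∈ Finset.Icc 1 k, ∑ j ∈ Finset.Icc 1 (s - 1), (2 : ℚ)^(j - 1))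

/-!
STATEMENT 19: For k = 2^s with s ≥ 2, give node weights μ(x_i) = 1 and μ(b_j) = 2^j, and
for an assignment I of all variables let w₁ be the total node weight of the variables
assigned 1 and w₀ be 1 (for a constant node fixed to 0) plus the total node weight of the
variables assigned 0.  Then w₁ + w₀ = 2k − 1 and the total weight of the constraints of
T^c(x₁ ∨ ⋯ ∨ x_k) satisfied by I equals w₁·w₀/2.
-/
lemma cross_sum (S : Finset ℕ) (w : ℕ → ℚ) (p : ℕ → Bool) :
    (∑ i ∈ S, ∑ j ∈ S, if i < j ∧ xor (p i) (p j) = true then w i * w j else 0)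
    = (∑ i ∈ S, if p i = true then w i else 0) *
      (∑ i ∈ S, if p i = true then 0 else w i) := by
  classical
  induction S using Finset.induction_on with
  | empty => simp
  | insert a S h ih =>
    rw [Finset.sum_insert h, Finset.sum_insert h, Finset.sum_insert h,
        Finset.sum_insert h]
    simp only [Finset.sum_insert h]
    have haa : (if a < a ∧ xor (p a) (p a) = true then w a * w a else 0) = 0 := by
      simp
    rw [haa, Finset.sum_add_distrib, ih]
    have key : (∑ j ∈ S, if a < j ∧ xor (p a) (p j) = true then w a * w j else 0)
        + (∑ i ∈ S, if i < a ∧ xor (p i) (p a) = true then w i * w a else 0)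
        = ∑ j ∈ S, (if xor (p a) (p j) = true then w a * w j else 0) := by
      rw [← Finset.sum_add_distrib]
      apply Finset.sum_congr rfl
      intro j hj
      have hne : j ≠ a := fun e => h (e ▸ hj)
      rcases lt_or_gt_of_ne hne with hlt | hgt
      · simp [hlt, not_lt.mpr hlt.le, Bool.xor_comm (p j) (p a), mul_comm]
      · simp [hgt, not_lt.mpr hgt.le, Bool.xor_comm (p j) (p a), mul_comm]
    have key2 : (∑ j ∈ S, (if xor (p a) (p j) = true then w a * w j else 0))
        = (if p a = true then w a else 0) * (∑ i ∈ S, if p i = true then 0 else w i)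
          + (∑ i ∈ S, if p i = true then w i else 0) * (if p a = true then 0 else w a) := by
      cases hpa : p a <;>
        simp [hpa, Finset.mul_sum, Finset.sum_mul, ite_mul, mul_ite, mul_comm] <;>
        exact Finset.sum_congr rfl fun j hj => by cases hpj : p j <;> simp [hpj]
    have h0 : (if p a = true then w a else 0) * (if p a = true then 0 else w a) = 0 := by
      cases hpa : p a <;> simp [hpa]
    linear_combination key + key2 - h0

theorem Tc_value_eq_cut_weight (s : ℕ) (hs : 2 ≤ s) (k : ℕ) (hk : k = 2 ^ s)
    (x b : ℕ → Bool) :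
    (∑ i ∈ Finset.Icc 1 k, (if x i = true then (1 : ℚ) else 0)) +
        (∑ j ∈ Finset.Icc 1 (s - 1), (if b j = true then (2 : ℚ)^j else 0)) +
      (1 + (∑ i ∈ Finset.Icc 1 k, (if x i = true then 0 else (1 : ℚ))) +
        (∑ j ∈ Finset.Icc 1 (s - 1), (if b j = true then 0 else (2 : ℚ)^j)))
      = 2 * (k : ℚ) - 1 ∧
    TcVal k s x b =
      ((∑ i ∈ Finset.Icc 1 k, (if x i = true then (1 : ℚ) else 0)) +
        (∑ j ∈ Finset.Icc 1 (s - 1), (if b j = true then (2 : ℚ)^j else 0))) *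
      (1 + (∑ i ∈ Finset.Icc 1 k, (if x i = true then 0 else (1 : ℚ))) +
        (∑ j ∈ Finset.Icc 1 (s - 1), (if b j = true then 0 else (2 : ℚ)^j))) / 2 := by
  set I := Finset.Icc 1 k with hI
  set J := Finset.Icc 1 (s - 1) with hJdef
  set X1 := ∑ i ∈ I, (if x i = true then (1:ℚ) else 0) with hX1
  set X0 := ∑ i ∈ I, (if x i = true then 0 else (1:ℚ)) with hX0
  set B1 := ∑ j ∈ J, (if b j = true then (2:ℚ)^j else 0) with hB1
  set B0 := ∑ j ∈ J, (if b j = true then 0 else (2:ℚ)^j) with hB0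
  have hX : X1 + X0 = (k : ℚ) := by
    rw [hX1, hX0, ← Finset.sum_add_distrib]
    have : ∀ i ∈ I, ((if x i = true then (1:ℚ) else 0) + if x i = true then 0 else (1:ℚ)) = 1 := by
      intro i _; cases hx : x i <;> simp [hx]
    rw [Finset.sum_congr rfl this, Finset.sum_const, hI, Nat.card_Icc]
    simp
  have hB : B1 + B0 = (2:ℚ)^s - 2 := by
    rw [hB1, hB0, ← Finset.sum_add_distrib]
    have : ∀ j ∈ J, ((if b j = true then (2:ℚ)^j else 0) + if b j = true then 0 else (2:ℚ)^j)
        = 2^j := by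
      intro j _; cases hb : b j <;> simp [hb]
    rw [Finset.sum_congr rfl this]
    have hJ : J = Finset.Ico 1 s := by
      rw [show s = (s-1)+1 by omega]; simp [hJdef, Finset.Ico_add_one_right_eq_Icc]
    rw [hJ, geom_sum_Ico (by norm_num : (2:ℚ) ≠ 1) (by omega)]
    norm_num
  have hks : (k : ℚ) = 2^s := by rw [hk]; push_cast; ring
  constructor
  · rw [show X1 + B1 + (1 + X0 + B0) = (X1 + X0) + (B1 + B0) + 1 by ring, hX, hB, hks]
    ring
  · have T1 : (∑ i ∈ I, if x i = true then (1:ℚ)/2 else 0) = X1 / 2 := by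
      rw [hX1, Finset.sum_div]
      exact Finset.sum_congr rfl fun i _ => by cases hx : x i <;> simp [hx]
    have T2 : (∑ j ∈ J, if b j = true then (2:ℚ)^(j-1) else 0) = B1 / 2 := by
      rw [hB1, Finset.sum_div]
      refine Finset.sum_congr rfl fun j hj => ?_
      obtain ⟨m, rfl⟩ : ∃ m, j = m + 1 :=
        ⟨j - 1, by have := (Finset.mem_Icc.mp (hJdef ▸ hj)).1; omega⟩
      cases hb : b (m+1) <;> simp [hb, pow_succ] <;> ring
    have T3 : (∑ i ∈ I, ∑ j ∈ I, if i < j ∧ xor (x i) (x j) = true then (1:ℚ)/2 else 0)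
        = X1 * X0 / 2 := by
      have C := cross_sum I (fun _ => (1:ℚ)) x
      simp only [mul_one] at C
      rw [hX1, hX0, ← C, Finset.sum_div]
      refine Finset.sum_congr rfl fun i _ => ?_
      rw [Finset.sum_div]
      refine Finset.sum_congr rfl fun j _ => ?_
      split <;> norm_num
    have T4 : (∑ i ∈ J, ∑ j ∈ J, if i < j ∧ xor (b i) (b j) = true then (2:ℚ)^(i+j-1) else 0)
        = B1 * B0 / 2 := by
      have C := cross_sum J (fun j => (2:ℚ)^j) b
      rw [hB1, hB0, ← C, Finset.sum_div]
      refine Finset.sum_congr rfl fun i hi => ?_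
      rw [Finset.sum_div]
      refine Finset.sum_congr rfl fun j _ => ?_
      obtain ⟨m, rfl⟩ : ∃ m, i = m + 1 :=
        ⟨i - 1, by have := (Finset.mem_Icc.mp (hJdef ▸ hi)).1; omega⟩
      split
      · show (2:ℚ)^(m+1+j-1) = 2^(m+1) * 2^j / 2
        rw [show m+1+j-1 = m+j by omega, pow_succ, pow_add]; ring
      · norm_num
    have T5 : (∑ i ∈ I, ∑ j ∈ J, if xor (x i) (b j) = true then (2:ℚ)^(j-1) else 0)
        = (X1 * B0 + X0 * B1) / 2 := by
      have inner : ∀ i, (∑ j ∈ J, if xor (x i) (b j) = true then (2:ℚ)^(j-1) else 0)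
          = (if x i = true then B0 else B1) / 2 := by
        intro i
        cases hx : x i
        · rw [if_neg (by simp), hB1, Finset.sum_div]
          refine Finset.sum_congr rfl fun j hj => ?_
          obtain ⟨m, rfl⟩ : ∃ m, j = m + 1 :=
            ⟨j - 1, by have := (Finset.mem_Icc.mp (hJdef ▸ hj)).1; omega⟩
          cases hb : b (m+1) <;> simp [hx, hb, pow_succ] <;> ring
        · rw [if_pos rfl, hB0, Finset.sum_div]
          refine Finset.sum_congr rfl fun j hj => ?_
          obtain ⟨m, rfl⟩ : ∃ m, j = m + 1 :=
            ⟨j - 1, by have := (Finset.mem_Icc.mp (hJdef ▸ hj)).1; omega⟩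
          cases hb : b (m+1) <;> simp [hx, hb, pow_succ] <;> ring
      rw [Finset.sum_congr rfl fun i _ => inner i, ← Finset.sum_div]
      congr 1
      rw [hX1, hX0, Finset.sum_mul, Finset.sum_mul, ← Finset.sum_add_distrib]
      exact Finset.sum_congr rfl fun i _ => by cases hx : x i <;> simp [hx]
    show (∑ i ∈ I, if x i = true then (1:ℚ)/2 else 0) +
        (∑ j ∈ J, if b j = true then (2:ℚ)^(j-1) else 0) + _ + _ + _ = _
    rw [T1, T2, T3, T4, T5]
    ring
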